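/- Let T be a tiling (finite set of pairwise disjoint diagrams in ℕ²) such that the projection of each diagram of T onto the first coordinate is an interval of integers. Define D ⪯ D' iff there exist (δ₁, δ₂) ∈ D and (δ₁', δ₂') ∈ D' with δ₁ = δ₁' and δ₂ ≤ δ₂'. Then the relation ⪯ extends to a partial order on T if and only if for all D, D' ∈ T, D ⪯ D' and D' ⪯ D imply D = D'. -/

import Mathlib

open Finset

/-- The relation `⪯` of the paper: `D ⪯ D'` iff there are `(δ₁,δ₂) ∈ D` and
`(δ₁',δ₂') ∈ D'` with `δ₁ = δ₁'` and `δ₂ ≤ δ₂'`. -/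
def DiagRel (D D' : Finset (ℕ × ℕ)) : Prop :=
  ∃ δ ∈ D, ∃ δ' ∈ D', δ.1 = δ'.1 ∧ δ.2 ≤ δ'.2

namespace DiagRelAux

/-- Generic cycle-rotation lemma. -/
lemma cycle_rotate {α : Type*} {r : α → α → Prop} :
    ∀ (k : ℕ) (a : α) (l : List α), List.Chain r a (l ++ [a]) →
      ∀ (hk : k < (a :: l).length),
      ∃ m : List α, m.length = l.length ∧
        List.Chain r ((a :: l)[k]) (m ++ [(a :: l)[k]]) ∧
        ∀ x ∈ (a :: l)[k] :: m, x ∈ a :: l := by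
  intro k
  induction k with
  | zero => intro a l h hk; exact ⟨l, rfl, h, fun x hx => hx⟩
  | succ k ih =>
    intro a l h hk
    match l, hk with
    | b :: l', hk =>
      have hh := (List.chain_cons).mp h
      have h1 : List.Chain r b ((l' ++ [a]) ++ [b]) := by
        have := List.isChain_cons_split.mpr ⟨hh.2, (List.isChain_pair).mpr hh.1⟩
        simpa [List.Chain] using this
      have hk' : k < (b :: (l' ++ [a])).length := by
        simp only [List.length_cons, List.length_append, List.length] at hk ⊢
        omega
      obtain ⟨m, hm1, hm2, hm3⟩ := ih b (l' ++ [a]) h1 hk'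
      have hv : (b :: (l' ++ [a]))[k]'hk' = (a :: b :: l')[k + 1]'hk := by
        match k, hk' with
        | 0, _ => simp
        | (j+1), hk' =>
          have hj : j < l'.length := by
            simp only [List.length_cons, List.length_append, List.length] at hk
            omega
          simp [List.getElem_append_left, hj]
      rw [hv] at hm2 hm3
      refine ⟨m, by simpa using hm1, hm2, fun x hx => ?_⟩
      have := hm3 x hx
      simp at this ⊢
      tauto

end DiagRelAux

theorem rel_extends_to_partial_order_iff (T : Finset (Finset (ℕ × ℕ)))
    (hT : T.Nonempty) (hne : ∀ D ∈ T, D.Nonempty)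
    (hdisj : ∀ D ∈ T, ∀ D' ∈ T, D ≠ D' → Disjoint D D')
    (hproj : ∀ D ∈ T, ∃ a b : ℕ, D.image Prod.fst = Finset.Icc a b) :
    (∃ le : {D // D ∈ T} → {D // D ∈ T} → Prop, IsPartialOrder {D // D ∈ T} le ∧
      ∀ A B : {D // D ∈ T}, DiagRel A.1 B.1 → le A B) ↔
    (∀ D ∈ T, ∀ D' ∈ T, DiagRel D D' → DiagRel D' D → D = D') := by
  constructor
  · rintro ⟨le, hpo, hext⟩ D hD D' hD' h1 h2
    have := hpo.toAntisymm.antisymm ⟨D, hD⟩ ⟨D', hD'⟩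
      (hext ⟨D, hD⟩ ⟨D', hD'⟩ h1) (hext ⟨D', hD'⟩ ⟨D, hD⟩ h2)
    exact congrArg Subtype.val this
  · intro H
    set α := {D // D ∈ T} with hα
    set r : α → α → Prop := fun A B => DiagRel A.1 B.1 ∧ A ≠ B with hr
    -- strict: an `r`-step means strictly below on every common column
    have strict : ∀ {A B : α}, r A B → ∀ p ∈ A.1, ∀ q ∈ B.1, p.1 = q.1 → p.2 < q.2 := by
      rintro A B ⟨hAB, hne'⟩ p hp q hq hpq
      by_contra hcon
      push_neg at hcon
      exact hne' (Subtype.ext (H A.1 A.2 B.1 B.2 hAB ⟨q, hq, p, hp, hpq.symm, hcon⟩))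
    -- intervals
    have interval : ∀ (A : α) {x y z : ℕ}, x ∈ A.1.image Prod.fst →
        z ∈ A.1.image Prod.fst → x ≤ y → y ≤ z → y ∈ A.1.image Prod.fst := by
      intro A x y z hx hz h1 h2
      obtain ⟨a, b, hab⟩ := hproj A.1 A.2
      rw [hab] at hx hz ⊢
      simp only [Finset.mem_Icc] at *
      omega
    have himg : ∀ A : α, (A.1.image Prod.fst).Nonempty := fun A => (hne A.1 A.2).image _
    set R : α → ℕ := fun A => (A.1.image Prod.fst).max' (himg A) with hR
    -- no cycles
    have nocyc : ∀ n (a : α) (l : List α), l.length = n →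
        List.Chain r a (l ++ [a]) → False := by
      intro n
      induction n using Nat.strong_induction_on with
      | _ n IH =>
        intro a l hlen hchain
        match l, hlen with
        | [], _ =>
          exact (List.isChain_pair.mp hchain).2 rfl
        | [b], _ =>
          obtain ⟨h1, h2⟩ := List.chain_cons.mp hchain
          have h2 := List.isChain_pair.mp h2
          exact h1.2 (Subtype.ext (H a.1 a.2 b.1 b.2 h1.1 h2.1))
        | (x :: y :: l0), hlen =>
          have hn : l0.length + 2 = n := by simpa using hlen
          -- choose vertex with minimal R
          obtain ⟨v, hvmem, hvmin⟩ := Finset.exists_min_image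
            (a :: x :: y :: l0).toFinset R ⟨a, by simp⟩
          rw [List.mem_toFinset] at hvmem
          obtain ⟨k, hk, hkv⟩ := List.mem_iff_getElem.mp hvmem
          obtain ⟨m, hm1, hm2, hm3⟩ := DiagRelAux.cycle_rotate k a (x :: y :: l0) hchain hk
          rw [hkv] at hm2 hm3
          have hvmin' : ∀ w ∈ v :: m, R v ≤ R w := fun w hw =>
            hvmin w (List.mem_toFinset.mpr (hm3 w hw))
          -- decompose m = b :: m'' ++ [z]
          have hmlen : m.length = l0.length + 2 := by simpa using hm1
          match m, hmlen, hm2, hm3, hvmin' with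
          | b :: mt, hmlen, hm2, hm3, hvmin' =>
            have hmt : mt ≠ [] := by
              intro h; rw [h] at hmlen; simp at hmlen
            set z : α := mt.getLast hmt with hz
            set m'' : List α := mt.dropLast with hm''
            have hdecomp : mt = m'' ++ [z] := (List.dropLast_append_getLast hmt).symm
            have hmt' : mt.length = m''.length + 1 := by rw [hdecomp]; simp
            have hm''n : m''.length + 2 = n := by simp at hmlen; omega
            have hm2' := List.chain_cons.mp hm2
            have hvb : r v b := hm2'.1
            have hbchain : List.Chain r b (m'' ++ [z] ++ [v]) := by
              rw [← hdecomp]; exact hm2'.2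
            have hsplit : List.Chain r b (m'' ++ [z]) ∧ List.Chain r z [v] := by
              refine List.isChain_cons_split.mp ?_
              simpa [List.append_assoc, List.Chain] using hbchain
            have hzv : r z v := List.isChain_pair.mp hsplit.2
            -- R v is a common column of z, v, b
            have hzmem : z ∈ v :: (b :: mt) := by
              simp [hdecomp]
            have hbmem : b ∈ v :: (b :: mt) := by simp
            have hRvz : R v ∈ z.1.image Prod.fst := by
              obtain ⟨δ, hδ, δ', hδ', he, _⟩ := hzv.1
              refine interval z (x := δ.1) (z := R z)
                (Finset.mem_image_of_mem _ hδ) (Finset.max'_mem _ _) ?_ ?_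
              · rw [he]; exact Finset.le_max' _ _ (Finset.mem_image_of_mem _ hδ')
              · exact hvmin' z hzmem
            have hRvb : R v ∈ b.1.image Prod.fst := by
              obtain ⟨δ, hδ, δ', hδ', he, _⟩ := hvb.1
              refine interval b (x := δ'.1) (z := R b)
                (Finset.mem_image_of_mem _ hδ') (Finset.max'_mem _ _) ?_ ?_
              · rw [← he]; exact Finset.le_max' _ _ (Finset.mem_image_of_mem _ hδ)
              · exact hvmin' b hbmem
            have hRvv : R v ∈ v.1.image Prod.fst := Finset.max'_mem _ _
            obtain ⟨pz, hpz, hpz1⟩ := Finset.mem_image.mp hRvz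
            obtain ⟨pb, hpb, hpb1⟩ := Finset.mem_image.mp hRvb
            obtain ⟨pv, hpv, hpv1⟩ := Finset.mem_image.mp hRvv
            by_cases hzb : z = b
            · -- cut out v : cycle b m''
              have hc : List.Chain r b (m'' ++ [b]) := by
                have := hsplit.1
                rw [hzb] at this
                exact this
              exact IH m''.length (by omega) b m'' rfl hc
            · rcases le_total pz.2 pb.2 with hle | hle
              · -- DiagRel z b : shortcut to a shorter cycle
                have hrzb : r z b := ⟨⟨pz, hpz, pb, hpb, by rw [hpz1, hpb1], hle⟩, hzb⟩
                have hc : List.Chain r b ((m'' ++ [z]) ++ [b]) := by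
                  have := List.isChain_cons_split.mpr ⟨hsplit.1, List.isChain_pair.mpr hrzb⟩
                  simpa [List.append_assoc, List.Chain] using this
                exact IH (m'' ++ [z]).length (by simp; omega) b (m'' ++ [z]) rfl hc
              · -- DiagRel b z : triangle v, b, z at column R v
                have hrbz : r b z := ⟨⟨pb, hpb, pz, hpz, by rw [hpz1, hpb1], hle⟩,
                  fun h => hzb h.symm⟩
                have h1 := strict hvb pv hpv pb hpb (by rw [hpv1, hpb1])
                have h2 := strict hrbz pb hpb pz hpz (by rw [hpz1, hpb1])
                have h3 := strict hzv pz hpz pv hpv (by rw [hpz1, hpv1])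
                omega
    -- build the partial order as the reflexive transitive closure of r
    refine ⟨Relation.ReflTransGen r, ?_, ?_⟩
    · have antis : ∀ A B : α, Relation.ReflTransGen r A B →
          Relation.ReflTransGen r B A → A = B := by
        intro A B hAB hBA
        by_contra hne'
        have tAB : Relation.TransGen r A B := by
          rcases Relation.reflTransGen_iff_eq_or_transGen.mp hAB with h | h
          · exact absurd h.symm hne'
          · exact h
        have tBA : Relation.TransGen r B A := by
          rcases Relation.reflTransGen_iff_eq_or_transGen.mp hBA with h | h
          · exact absurd h hne'
          · exact h
        have tAA : Relation.TransGen r A A := tAB.trans tBA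
        obtain ⟨C, hAC, hCA⟩ := Relation.TransGen.head'_iff.mp tAA
        obtain ⟨l, hl, hlast⟩ := List.exists_isChain_cons_of_relationReflTransGen hCA
        have hCl : List.Chain r A (C :: l) := List.Chain.cons hAC hl
        have hnil : C :: l ≠ [] := List.cons_ne_nil _ _
        have hdecomp : C :: l = (C :: l).dropLast ++ [A] := by
          conv_lhs => rw [← List.dropLast_append_getLast hnil]
          rw [show (C :: l).getLast hnil = A from hlast]
        rw [hdecomp] at hCl
        exact nocyc _ A (C :: l).dropLast rfl hCl
      exact { refl := fun a => Relation.ReflTransGen.refl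
              trans := fun a b c => Relation.ReflTransGen.trans
              antisymm := antis }
    · intro A B h
      by_cases hAB : A = B
      · rw [hAB]
      · exact Relation.ReflTransGen.single ⟨h, hAB⟩
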